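/- The initial and terminal colour sets of a tangle machine, indexed so that for each i the register s_i is the terminal register of the open process whose initial register is r_i, are stable machine invariants: if two machines are stably equivalent, then there is a bijection between their open processes and rack automorphisms on connected components carrying the indexed initial and terminal colours of one machine to those of the other. -/

import Mathlib

/-! ### Racks and quandles -/

/-- A rack structure on a set `Q`: a binary operation `act` (written `x ▷ y` in the paper)
such that `· ▷ z` is an automorphism of `(Q, ▷)` for every `z`, with inverse operation
`inv` (written `◁`). -/
structure RackStr (Q : Type) where
  act : Q → Q → Q
  inv : Q → Q → Q
  act_inv : ∀ x y, inv (act x y) y = x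
  inv_act : ∀ x y, act (inv x y) y = x
  self_distrib : ∀ x y z, act (act x y) z = act (act x z) (act y z)

/-- A quandle is a rack all of whose elements are idempotent. -/
def RackStr.IsQuandle {Q : Type} (R : RackStr Q) : Prop :=
  ∀ x, R.act x x = x

/-- An automorphism of a rack. -/
structure RackAut {Q : Type} (R : RackStr Q) where
  toEquiv : Q ≃ Q
  map_act : ∀ x y, toEquiv (R.act x y) = R.act (toEquiv x) (toEquiv y)

/-- A homomorphism of racks. -/
structure RackHom {Q₁ Q₂ : Type} (R₁ : RackStr Q₁) (R₂ : RackStr Q₂) where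
  toFun : Q₁ → Q₂
  map_act : ∀ x y, toFun (R₁.act x y) = R₂.act (toFun x) (toFun y)
  map_inv : ∀ x y, toFun (R₁.inv x y) = R₂.inv (toFun x) (toFun y)

/-- An isomorphism of racks. -/
structure RackIso {Q₁ Q₂ : Type} (R₁ : RackStr Q₁) (R₂ : RackStr Q₂) where
  toEquiv : Q₁ ≃ Q₂
  map_act : ∀ x y, toEquiv (R₁.act x y) = R₂.act (toEquiv x) (toEquiv y)
  map_inv : ∀ x y, toEquiv (R₁.inv x y) = R₂.inv (toEquiv x) (toEquiv y)

/-! ### Underlying graphs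

The underlying graph of a tangle machine is a finite directed graph in which every vertex
has in-degree at most one and out-degree at most one, i.e. a disjoint union of directed
path graphs (open processes) and directed cycles (closed processes). -/

structure TMGraph where
  V : Type
  E : Type
  fV : Fintype V
  fE : Fintype E
  dV : DecidableEq V
  dE : DecidableEq E
  src : E → V
  tgt : E → V
  src_inj : Function.Injective src
  tgt_inj : Function.Injective tgt

attribute [instance] TMGraph.fV TMGraph.fE TMGraph.dV TMGraph.dE

/-- Two registers are adjacent if some edge joins them (in either direction). -/
def TMGraph.adj (G : TMGraph) (v w : G.V) : Prop :=
  ∃ e, (G.src e = v ∧ G.tgt e = w) ∨ (G.src e = w ∧ G.tgt e = v)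

/-- Two registers are connected if they lie in the same process. -/
def TMGraph.conn (G : TMGraph) : G.V → G.V → Prop := Relation.EqvGen G.adj

def TMGraph.compSetoid (G : TMGraph) : Setoid G.V :=
  ⟨G.conn, Relation.EqvGen.is_equivalence _⟩

/-- The set of processes (connected components) of the underlying graph. -/
def TMGraph.Comp (G : TMGraph) : Type := Quotient G.compSetoid

/-- The process containing a given register. -/
def TMGraph.compOf (G : TMGraph) (v : G.V) : G.Comp := Quotient.mk G.compSetoid v

/-- An initial register of an open process: no edge enters it. -/
def TMGraph.Initial (G : TMGraph) (v : G.V) : Prop := ∀ e, G.tgt e ≠ v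

/-- A terminal register of an open process: no edge leaves it. -/
def TMGraph.Terminal (G : TMGraph) (v : G.V) : Prop := ∀ e, G.src e ≠ v

/-- A `2`-valent vertex: some edge enters it and some edge leaves it. -/
def TMGraph.TwoValent (G : TMGraph) (v : G.V) : Prop :=
  (∃ e, G.tgt e = v) ∧ (∃ e, G.src e = v)

/-- Contraction of a (non-loop) edge `e0` of `G`: the edge `e0` is removed and its
target is identified with its source. -/
def TMGraph.contract (G : TMGraph) (e0 : G.E) (hne : G.src e0 ≠ G.tgt e0) : TMGraph where
  V := {v : G.V // v ≠ G.tgt e0}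
  E := {e : G.E // e ≠ e0}
  fV := inferInstance
  fE := inferInstance
  dV := inferInstance
  dE := inferInstance
  src := fun e => if h : G.src e.1 = G.tgt e0 then ⟨G.src e0, hne⟩ else ⟨G.src e.1, h⟩
  tgt := fun e => ⟨G.tgt e.1, fun h => e.2 (G.tgt_inj h)⟩
  src_inj := by
    rintro ⟨e1, h1⟩ ⟨e2, h2⟩ h
    have h' : (if ha : G.src e1 = G.tgt e0 then (⟨G.src e0, hne⟩ : {v : G.V // v ≠ G.tgt e0})
          else ⟨G.src e1, ha⟩) =
        (if hb : G.src e2 = G.tgt e0 then (⟨G.src e0, hne⟩ : {v : G.V // v ≠ G.tgt e0})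
          else ⟨G.src e2, hb⟩) := h
    simp only [Subtype.mk.injEq]
    by_cases ha : G.src e1 = G.tgt e0 <;> by_cases hb : G.src e2 = G.tgt e0
    · exact G.src_inj (ha.trans hb.symm)
    · rw [dif_pos ha, dif_neg hb] at h'
      exact absurd (G.src_inj (congrArg Subtype.val h')).symm h2
    · rw [dif_neg ha, dif_pos hb] at h'
      exact absurd (G.src_inj (congrArg Subtype.val h')) h1
    · rw [dif_neg ha, dif_neg hb] at h'
      exact G.src_inj (congrArg Subtype.val h')
  tgt_inj := by
    rintro ⟨e1, h1⟩ ⟨e2, h2⟩ h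
    simp only [Subtype.mk.injEq] at h ⊢
    exact G.tgt_inj h

/-- An isomorphism of underlying graphs. -/
structure GraphIso (G H : TMGraph) where
  vEquiv : G.V ≃ H.V
  eEquiv : G.E ≃ H.E
  src_map : ∀ e, H.src (eEquiv e) = vEquiv (G.src e)
  tgt_map : ∀ e, H.tgt (eEquiv e) = vEquiv (G.tgt e)

/-! ### Tangle machines -/

/-- A tangle machine over a rack `(Q, R)` with underlying graph `G`: a partially defined
interaction function `φ` assigning to an edge its agent register and sign, and a colouring
`ρ` of the registers by `Q`, compatible with the interactions. -/
structure Machine (Q : Type) (R : RackStr Q) (G : TMGraph) where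
  φ : G.E → Option (G.V × Bool)
  ρ : G.V → Q
  compat : ∀ e, match φ e with
    | some (r, true) => ρ (G.tgt e) = R.act (ρ (G.src e)) (ρ r)
    | some (r, false) => ρ (G.tgt e) = R.inv (ρ (G.src e)) (ρ r)
    | none => ρ (G.tgt e) = ρ (G.src e)

variable {Q : Type} {R : RackStr Q} {G : TMGraph}

/-- A register is an agent if it operates on some edge. -/
def Machine.IsAgent (M : Machine Q R G) (r : G.V) : Prop :=
  ∃ e p, M.φ e = some p ∧ p.1 = r

/-! ### Reidemeister moves -/

/-- Applying rack automorphisms of `Q` to the colourings of the connected components. -/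
def RecolourMove (M M' : Machine Q R G) : Prop :=
  M'.φ = M.φ ∧ ∃ ψ : G.Comp → RackAut R, ∀ v, M'.ρ v = (ψ (G.compOf v)).toEquiv (M.ρ v)

def R2Half (M M' : Machine Q R G) (e1 e2 : G.E) : Prop :=
  ∃ (r : G.V) (s : Bool), M.φ e1 = none ∧ M.φ e2 = none ∧
    M'.φ e1 = some (r, s) ∧ M'.φ e2 = some (r, !s)

/-- The Reidemeister II move: on two consecutive edges, a pair of interactions by the same
agent with opposite signs is created or cancelled. -/
def R2Move (M M' : Machine Q R G) : Prop :=
  ∃ e1 e2, G.tgt e1 = G.src e2 ∧ (R2Half M M' e1 e2 ∨ R2Half M' M e1 e2) ∧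
    (∀ e, e ≠ e1 → e ≠ e2 → M'.φ e = M.φ e) ∧
    (∀ v, v ≠ G.tgt e1 → M'.ρ v = M.ρ v)

/-- The Reidemeister III move: the strand through `f` is coloured `y` (source) and
`y ▷ z` (target), `rz` is the register coloured `z`; each strand of the move consists of
two consecutive edges, operated on first by `rz` then by the register coloured `y ▷ z`
on one side, and first by the register coloured `y` then by `rz` on the other side. -/
def R3Move (M M' : Machine Q R G) : Prop :=
  ∃ (f : G.E) (rz : G.V) (strands : Finset (G.E × G.E)),
    M.φ f = some (rz, true) ∧ M'.φ f = some (rz, true) ∧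
    (∀ p ∈ strands, G.tgt p.1 = G.src p.2 ∧
      M.φ p.1 = some (rz, true) ∧ M.φ p.2 = some (G.tgt f, true) ∧
      M'.φ p.1 = some (G.src f, true) ∧ M'.φ p.2 = some (rz, true)) ∧
    (∀ e, (∀ p ∈ strands, e ≠ p.1 ∧ e ≠ p.2) → M'.φ e = M.φ e) ∧
    (∀ v, (∀ p ∈ strands, v ≠ G.tgt p.1) → M'.ρ v = M.ρ v)

def R1Half (M M' : Machine Q R G) (e : G.E) : Prop :=
  ∃ s : Bool, M.φ e = none ∧
    (M'.φ e = some (G.src e, s) ∨ M'.φ e = some (G.tgt e, s))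

/-- The Reidemeister I move (valid for quandle machines): an edge operated on by its own
register is created or deleted. -/
def R1Move (M M' : Machine Q R G) : Prop :=
  ∃ e, (R1Half M M' e ∨ R1Half M' M e) ∧
    (∀ e', e' ≠ e → M'.φ e' = M.φ e') ∧ M'.ρ = M.ρ

/-- A single move on machines over a fixed underlying graph.  The flag `b` records
whether the move R1 (valid only for quandle machines) is admitted. -/
def Move (b : Bool) (M M' : Machine Q R G) : Prop :=
  RecolourMove M M' ∨ R2Move M M' ∨ R3Move M M' ∨
    (b = true ∧ R.IsQuandle ∧ R1Move M M')

/-- Equivalence of machines over a fixed underlying graph: generated by rack automorphisms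
of the colourings of connected components and the Reidemeister moves R2 and R3 (and also
R1, when `b = true` and the rack is a quandle). -/
def MEquiv (b : Bool) : Machine Q R G → Machine Q R G → Prop :=
  Relation.EqvGen (Move b)

/-! ### Stabilization, and machines up to graph isomorphism -/

/-- A machine bundled with its underlying graph. -/
structure BMachine (Q : Type) (R : RackStr Q) where
  G : TMGraph
  m : Machine Q R G

/-- An isomorphism (relabelling) of machines. -/
def MachineIso (M M' : BMachine Q R) : Prop :=
  ∃ i : GraphIso M.G M'.G,
    (∀ v, M'.m.ρ (i.vEquiv v) = M.m.ρ v) ∧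
    (∀ e, M'.m.φ (i.eEquiv e) = (M.m.φ e).map (fun p => (i.vEquiv p.1, p.2)))

/-- Contraction of an edge `e0` outside the domain of `φ`: the destabilized machine. -/
def Machine.destab (M : Machine Q R G) (e0 : G.E) (h0 : M.φ e0 = none)
    (hne : G.src e0 ≠ G.tgt e0) : Machine Q R (G.contract e0 hne) where
  φ := fun e => (M.φ e.1).map fun p =>
    (if hp : p.1 = G.tgt e0 then ⟨G.src e0, hne⟩ else ⟨p.1, hp⟩, p.2)
  ρ := fun v => M.ρ v.1
  compat := by
    have hst : M.ρ (G.tgt e0) = M.ρ (G.src e0) := by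
      have h := M.compat e0
      rw [h0] at h
      exact h
    have key : ∀ r : G.V,
        M.ρ ((if hp : r = G.tgt e0 then (⟨G.src e0, hne⟩ : {v : G.V // v ≠ G.tgt e0})
          else ⟨r, hp⟩) : {v : G.V // v ≠ G.tgt e0}).1 = M.ρ r := by
      intro r
      by_cases hp : r = G.tgt e0
      · rw [dif_pos hp, hp]
        exact hst.symm
      · rw [dif_neg hp]
    rintro ⟨e, he⟩
    have h := M.compat e
    cases h1 : M.φ e with
    | none =>
      rw [h1] at h
      show M.ρ (G.tgt e) =
        M.ρ ((if hs : G.src e = G.tgt e0 then (⟨G.src e0, hne⟩ : {v : G.V // v ≠ G.tgt e0})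
          else ⟨G.src e, hs⟩) : {v : G.V // v ≠ G.tgt e0}).1
      rw [key (G.src e)]
      exact h
    | some p =>
      obtain ⟨r, s⟩ := p
      rw [h1] at h
      cases s with
      | true =>
        show M.ρ (G.tgt e) =
          R.act (M.ρ ((if hs : G.src e = G.tgt e0 then
              (⟨G.src e0, hne⟩ : {v : G.V // v ≠ G.tgt e0}) else ⟨G.src e, hs⟩) :
              {v : G.V // v ≠ G.tgt e0}).1)
            (M.ρ ((if hp : r = G.tgt e0 then
              (⟨G.src e0, hne⟩ : {v : G.V // v ≠ G.tgt e0}) else ⟨r, hp⟩) :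
              {v : G.V // v ≠ G.tgt e0}).1)
        rw [key (G.src e), key r]
        exact h
      | false =>
        show M.ρ (G.tgt e) =
          R.inv (M.ρ ((if hs : G.src e = G.tgt e0 then
              (⟨G.src e0, hne⟩ : {v : G.V // v ≠ G.tgt e0}) else ⟨G.src e, hs⟩) :
              {v : G.V // v ≠ G.tgt e0}).1)
            (M.ρ ((if hp : r = G.tgt e0 then
              (⟨G.src e0, hne⟩ : {v : G.V // v ≠ G.tgt e0}) else ⟨r, hp⟩) :
              {v : G.V // v ≠ G.tgt e0}).1)
        rw [key (G.src e), key r]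
        exact h

/-- A single step of equivalence of bundled machines (no stabilization). -/
inductive EStep (b : Bool) : BMachine Q R → BMachine Q R → Prop
  | move {G : TMGraph} {M M' : Machine Q R G} :
      Move b M M' → EStep b ⟨G, M⟩ ⟨G, M'⟩
  | iso {M M' : BMachine Q R} : MachineIso M M' → EStep b M M'

/-- A single step of stable equivalence of bundled machines: a Reidemeister move, an
isomorphism, or a (de)stabilization, i.e. contraction of an edge outside the domain of
`φ` at least one of whose endpoint registers lies outside the image of `φ`. -/
inductive SStep (b : Bool) : BMachine Q R → BMachine Q R → Prop
  | move {G : TMGraph} {M M' : Machine Q R G} :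
      Move b M M' → SStep b ⟨G, M⟩ ⟨G, M'⟩
  | iso {M M' : BMachine Q R} : MachineIso M M' → SStep b M M'
  | destab {G : TMGraph} (M : Machine Q R G) (e0 : G.E) (h0 : M.φ e0 = none)
      (hne : G.src e0 ≠ G.tgt e0)
      (hout : ¬ M.IsAgent (G.src e0) ∨ ¬ M.IsAgent (G.tgt e0)) :
      SStep b ⟨G, M⟩ ⟨G.contract e0 hne, M.destab e0 h0 hne⟩

/-- Equivalence of machines. -/
def EquivB (b : Bool) : BMachine Q R → BMachine Q R → Prop :=
  Relation.EqvGen (EStep b)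

/-- Stable equivalence of machines. -/
def StabEquivB (b : Bool) : BMachine Q R → BMachine Q R → Prop :=
  Relation.EqvGen (SStep b)

/-! ### Interactions: trivial and unit interactions -/

/-- The interaction with agent `r` is trivial if the machine is equivalent to one in which
`r` has no patients. -/
def Machine.TrivialAt (M : Machine Q R G) (r : G.V) : Prop :=
  ∃ M' : Machine Q R G, MEquiv true M M' ∧ ∀ e p, M'.φ e = some p → p.1 ≠ r

/-- The interaction with agent `r` is unit if the machine is equivalent to one in which all
patients of `r` share the same colour as `r`. -/
def Machine.UnitAt (M : Machine Q R G) (r : G.V) : Prop :=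
  ∃ M' : Machine Q R G, MEquiv true M M' ∧ ∀ e p, M'.φ e = some p → p.1 = r →
    M'.ρ (G.src e) = M'.ρ r ∧ M'.ρ (G.tgt e) = M'.ρ r

/-- The nontrivial interaction number of a machine. -/
noncomputable def Machine.nontrivialNum (M : Machine Q R G) : ℕ :=
  Nat.card {r : G.V // ¬ M.TrivialAt r}

/-- The nonunit interaction number of a machine. -/
noncomputable def Machine.nonunitNum (M : Machine Q R G) : ℕ :=
  Nat.card {r : G.V // ¬ M.UnitAt r}

/-! ### Connect sums and factorizations -/

/-- `M` is the connect sum of the machines in the list `l` (all over the same underlying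
graph, with the same colouring, and with pairwise disjoint interaction domains). -/
def IsConnectSumList (M : Machine Q R G) (l : List (Machine Q R G)) : Prop :=
  (∀ N ∈ l, N.ρ = M.ρ) ∧
  l.Pairwise (fun N N' => ∀ e, N.φ e ≠ none → N'.φ e = none) ∧
  (∀ N ∈ l, ∀ e, N.φ e ≠ none → N.φ e = M.φ e) ∧
  (∀ e, M.φ e ≠ none → ∃ N ∈ l, N.φ e = M.φ e) ∧
  (∀ e, M.φ e = none → ∀ N ∈ l, N.φ e = none)

/-- `M` is the connect sum `M₁ # M₂`. -/
def IsConnectSum2 (M M₁ M₂ : Machine Q R G) : Prop :=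
  IsConnectSumList M [M₁, M₂]

/-- A factorization of `M`: a machine equivalent to `M` is a connect sum of the machines
in the list `l`. -/
def IsFactorizationL (M : Machine Q R G) (l : List (Machine Q R G)) : Prop :=
  ∃ M' : Machine Q R G, MEquiv true M M' ∧ IsConnectSumList M' l

/-- A unit machine: all of its interactions are trivial. -/
def Machine.IsUnitMachine (M : Machine Q R G) : Prop :=
  ∀ r, M.TrivialAt r

/-- A prime machine: not a unit, and in any two-factor factorization one factor is a unit. -/
def Machine.IsPrime (M : Machine Q R G) : Prop :=
  ¬ M.IsUnitMachine ∧
  ∀ M₁ M₂ : Machine Q R G, IsFactorizationL M [M₁, M₂] →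
    M₁.IsUnitMachine ∨ M₂.IsUnitMachine

/-- The complexity of a machine: the maximal number of prime factors of a factorization. -/
noncomputable def Machine.complexity (M : Machine Q R G) : ℕ :=
  sSup {k | ∃ l : List (Machine Q R G), l.length = k ∧ IsFactorizationL M l ∧
    ∀ N ∈ l, N.IsPrime}

/-- `N'` refines `N`: `N'` is obtained from `N` by factorizing one of its factors into two. -/
def Refines (N' N : List (Machine Q R G)) : Prop :=
  ∃ (Ni A B : Machine Q R G) (rest : List (Machine Q R G)),
    N.Perm (Ni :: rest) ∧ N'.Perm (A :: B :: rest) ∧ IsFactorizationL Ni [A, B]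

/-- Refinement into two non-unit factors. -/
def NURefines (N' N : List (Machine Q R G)) : Prop :=
  ∃ (Ni A B : Machine Q R G) (rest : List (Machine Q R G)),
    N.Perm (Ni :: rest) ∧ N'.Perm (A :: B :: rest) ∧ IsFactorizationL Ni [A, B] ∧
    ¬ A.IsUnitMachine ∧ ¬ B.IsUnitMachine

/-- Topological equivalence of factorizations: generated by refinements into non-unit
factors and their inverses. -/
def TopEquiv : List (Machine Q R G) → List (Machine Q R G) → Prop :=
  Relation.EqvGen NURefines

/-- A split machine: it is a disjoint union of two nonempty machines with no interactions
between them. -/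
def Machine.IsSplit (M : Machine Q R G) : Prop :=
  ∃ S : Set G.V, S.Nonempty ∧ Sᶜ.Nonempty ∧
    (∀ e, (G.src e ∈ S ↔ G.tgt e ∈ S)) ∧
    (∀ e p, M.φ e = some p → (G.src e ∈ S ↔ p.1 ∈ S))

/-! ### Linking numbers -/

/-- The linking number of register `r` with process `c`: the number of positive edges
in `c` operated on by `r` minus the number of negative ones. -/
noncomputable def Machine.linkNum (M : Machine Q R G) (r : G.V) (c : G.Comp) : ℤ :=
  (Nat.card {e : G.E // M.φ e = some (r, true) ∧ G.compOf (G.src e) = c} : ℤ) -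
  (Nat.card {e : G.E // M.φ e = some (r, false) ∧ G.compOf (G.src e) = c} : ℤ)

/-- The unframed linking number: diagonal entries are set to zero. -/
noncomputable def Machine.linkNum₀ (M : Machine Q R G) (r : G.V) (c : G.Comp) : ℤ :=
  letI := Classical.dec (c = G.compOf r)
  if c = G.compOf r then 0 else M.linkNum r c

/-! ### Labelled graphs and reduced (linking) graphs -/

/-- A graph together with a labelling of each vertex by a vector indexed by `P`. -/
structure LGraph where
  G : TMGraph
  P : Type
  lab : G.V → P → ℤ

/-- An isomorphism of labelled graphs. -/
structure LGraphIso (L L' : LGraph) where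
  toGraphIso : GraphIso L.G L'.G
  pEquiv : L.P ≃ L'.P
  lab_map : ∀ v p, L'.lab (toGraphIso.vEquiv v) (pEquiv p) = L.lab v p

/-- Contraction of the edge `e0` in a labelled graph; the surviving merged vertex keeps the
label of the target of `e0` if `keepTgt = true`, and of the source otherwise. -/
def LGraph.contractMerge (L : LGraph) (e0 : L.G.E) (hne : L.G.src e0 ≠ L.G.tgt e0)
    (keepTgt : Bool) : LGraph where
  G := L.G.contract e0 hne
  P := L.P
  lab := fun v p => if keepTgt = true ∧ v.1 = L.G.src e0 then L.lab (L.G.tgt e0) p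
    else L.lab v.1 p

/-- A reduction step on labelled graphs: contraction of an edge incident to a `2`-valent
vertex all of whose label entries vanish, removing that vertex. -/
def ReduceStep (L L' : LGraph) : Prop :=
  ∃ (e0 : L.G.E) (hne : L.G.src e0 ≠ L.G.tgt e0),
    (L.G.TwoValent (L.G.tgt e0) ∧ (∀ p, L.lab (L.G.tgt e0) p = 0) ∧
      Nonempty (LGraphIso L' (L.contractMerge e0 hne false))) ∨
    (L.G.TwoValent (L.G.src e0) ∧ (∀ p, L.lab (L.G.src e0) p = 0) ∧
      Nonempty (LGraphIso L' (L.contractMerge e0 hne true)))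

/-- `L'` is the (fully) reduced labelled graph of `L`. -/
def IsReductionOf (L' L : LGraph) : Prop :=
  Relation.ReflTransGen ReduceStep L L' ∧ ∀ L'', ¬ ReduceStep L' L''

/-- A graph viewed as a labelled graph with empty label vectors. -/
def zeroLGraph (G : TMGraph) : LGraph := ⟨G, PEmpty, fun _ _ => 0⟩

/-- The linking graph of a machine: its underlying graph, labelled by linking vectors. -/
noncomputable def linkLGraph (M : BMachine Q R) : LGraph :=
  ⟨M.G, M.G.Comp, fun v c => M.m.linkNum v c⟩

/-- The unframed linking graph of a machine. -/
noncomputable def linkLGraph₀ (M : BMachine Q R) : LGraph :=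
  ⟨M.G, M.G.Comp, fun v c => M.m.linkNum₀ v c⟩

/-! ### The fundamental rack -/

/-- Formal rack terms in generators `V`. -/
inductive RTerm (V : Type) : Type
  | gen : V → RTerm V
  | act : RTerm V → RTerm V → RTerm V
  | inv : RTerm V → RTerm V → RTerm V

def RTerm.map {α β : Type} (f : α → β) : RTerm α → RTerm β
  | .gen v => .gen (f v)
  | .act x y => .act (x.map f) (y.map f)
  | .inv x y => .inv (x.map f) (y.map f)

/-- The congruence on rack terms generated by the rack axioms together with the
relations `Rel`. -/
inductive PCong {V : Type} (Rel : RTerm V → RTerm V → Prop) :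
    RTerm V → RTerm V → Prop
  | of {x y} : Rel x y → PCong Rel x y
  | refl (x) : PCong Rel x x
  | symm {x y} : PCong Rel x y → PCong Rel y x
  | trans {x y z} : PCong Rel x y → PCong Rel y z → PCong Rel x z
  | act_congr {x x' y y'} : PCong Rel x x' → PCong Rel y y' →
      PCong Rel (.act x y) (.act x' y')
  | inv_congr {x x' y y'} : PCong Rel x x' → PCong Rel y y' →
      PCong Rel (.inv x y) (.inv x' y')
  | act_inv (x y) : PCong Rel (.inv (.act x y) y) x
  | inv_act (x y) : PCong Rel (.act (.inv x y) y) x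
  | distrib (x y z) : PCong Rel (.act (.act x y) z) (.act (.act x z) (.act y z))

def pcongSetoid {V : Type} (Rel : RTerm V → RTerm V → Prop) : Setoid (RTerm V) :=
  ⟨PCong Rel, ⟨PCong.refl, PCong.symm, PCong.trans⟩⟩

/-- The rack presented by generators `V` and relations `Rel`. -/
def PresentedRack (V : Type) (Rel : RTerm V → RTerm V → Prop) : Type :=
  Quotient (pcongSetoid Rel)

def presentedRackStr (V : Type) (Rel : RTerm V → RTerm V → Prop) :
    RackStr (PresentedRack V Rel) where
  act := Quotient.map₂ RTerm.act (fun _ _ h1 _ _ h2 => PCong.act_congr h1 h2)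
  inv := Quotient.map₂ RTerm.inv (fun _ _ h1 _ _ h2 => PCong.inv_congr h1 h2)
  act_inv := fun x y => Quotient.inductionOn₂ x y fun a b =>
    Quotient.sound (PCong.act_inv a b)
  inv_act := fun x y => Quotient.inductionOn₂ x y fun a b =>
    Quotient.sound (PCong.inv_act a b)
  self_distrib := fun x y z => Quotient.inductionOn₃ x y z fun a b c =>
    Quotient.sound (PCong.distrib a b c)

/-- The defining relations of the fundamental rack of a machine. -/
def machineRel (M : Machine Q R G) (a b : RTerm G.V) : Prop :=
  ∃ e, (M.φ e = none ∧ a = .gen (G.tgt e) ∧ b = .gen (G.src e)) ∨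
    (∃ r, M.φ e = some (r, true) ∧ a = .gen (G.tgt e) ∧
      b = .act (.gen (G.src e)) (.gen r)) ∨
    (∃ r, M.φ e = some (r, false) ∧ a = .gen (G.tgt e) ∧
      b = .inv (.gen (G.src e)) (.gen r))

/-- The fundamental rack of a machine. -/
def FundRack (M : Machine Q R G) : Type := PresentedRack G.V (machineRel M)

def fundRackStr (M : Machine Q R G) : RackStr (FundRack M) :=
  presentedRackStr G.V (machineRel M)

/-- The canonical colouring of a machine by its fundamental rack. -/
def fundColour (M : Machine Q R G) : G.V → FundRack M :=
  fun v => Quotient.mk (pcongSetoid (machineRel M)) (RTerm.gen v)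

/-- The relations of the free product of the fundamental racks of two machines on the
disjoint union of their generator sets. -/
def freeProdRel (M₁ M₂ : Machine Q R G) (a b : RTerm (G.V ⊕ G.V)) : Prop :=
  (∃ a' b', machineRel M₁ a' b' ∧ a = a'.map Sum.inl ∧ b = b'.map Sum.inl) ∨
  (∃ a' b', machineRel M₂ a' b' ∧ a = a'.map Sum.inr ∧ b = b'.map Sum.inr)

/-- The free product of the fundamental racks of two machines. -/
def FreeProdRack (M₁ M₂ : Machine Q R G) : Type :=
  PresentedRack (G.V ⊕ G.V) (freeProdRel M₁ M₂)

def freeProdRackStr (M₁ M₂ : Machine Q R G) : RackStr (FreeProdRack M₁ M₂) :=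
  presentedRackStr (G.V ⊕ G.V) (freeProdRel M₁ M₂)

/-! ### Shannon capacity -/

/-- Two colours can be confused if they both occur among the three colours (input colour,
agent colour, output colour) of a single interaction edge. -/
def Machine.Confusable (M : Machine Q R G) (a b : Q) : Prop :=
  ∃ e p, M.φ e = some p ∧
    (a = M.ρ (G.src e) ∨ a = M.ρ p.1 ∨ a = M.ρ (G.tgt e)) ∧
    (b = M.ρ (G.src e) ∨ b = M.ρ p.1 ∨ b = M.ρ (G.tgt e))

/-- Two messages are confusable if in each coordinate the entries are equal or confusable. -/
def Machine.MsgConfusable (M : Machine Q R G) {k : ℕ} (m₁ m₂ : Fin k → Q) : Prop :=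
  ∀ i, m₁ i = m₂ i ∨ M.Confusable (m₁ i) (m₂ i)

/-- A distinct set of messages: entries are colours of registers, and no two distinct
members can be confused. -/
def Machine.DistinctSet (M : Machine Q R G) {k : ℕ} (S : Set (Fin k → Q)) : Prop :=
  (∀ m ∈ S, ∀ i, m i ∈ Set.range M.ρ) ∧
  ∀ m₁ ∈ S, ∀ m₂ ∈ S, m₁ ≠ m₂ → ¬ M.MsgConfusable m₁ m₂

/-- The maximal number of pairwise distinct messages of length `k`. -/
noncomputable def Machine.capK (M : Machine Q R G) (k : ℕ) : ℕ :=
  sSup {n | ∃ S : Finset (Fin k → Q), M.DistinctSet (S : Set (Fin k → Q)) ∧ S.card = n}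

/-- The Shannon capacity of a machine. -/
noncomputable def Machine.shannonCapacity (M : Machine Q R G) : ℝ :=
  ⨆ k : ℕ, (M.capK (k + 1) : ℝ) ^ ((1 : ℝ) / (k + 1))

section StableInvariantAux

/-! Auxiliary development for the stable invariance theorem. -/

/-- One directed step along an edge. -/
def gstep (G : TMGraph) (v w : G.V) : Prop := ∃ e, G.src e = v ∧ G.tgt e = w

lemma gstep_det {G : TMGraph} {v w x : G.V} (h1 : gstep G v w) (h2 : gstep G v x) : w = x := by
  obtain ⟨e1, he1, ht1⟩ := h1
  obtain ⟨e2, he2, ht2⟩ := h2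
  have : e1 = e2 := G.src_inj (he1.trans he2.symm)
  subst this
  exact ht1.symm.trans ht2

lemma gstep_codet {G : TMGraph} {v w x : G.V} (h1 : gstep G v w) (h2 : gstep G x w) : v = x := by
  obtain ⟨e1, he1, ht1⟩ := h1
  obtain ⟨e2, he2, ht2⟩ := h2
  have : e1 = e2 := G.tgt_inj (ht1.trans ht2.symm)
  subst this
  exact he1.symm.trans he2

lemma rtg_total {G : TMGraph} {a b : G.V} :
    ∀ {v : G.V}, Relation.ReflTransGen (gstep G) v a → Relation.ReflTransGen (gstep G) v b →
    Relation.ReflTransGen (gstep G) a b ∨ Relation.ReflTransGen (gstep G) b a := by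
  intro v h1
  induction h1 using Relation.ReflTransGen.head_induction_on with
  | refl => intro h2; exact Or.inl h2
  | head hvc hca ih =>
    intro h2
    rcases Relation.ReflTransGen.cases_head h2 with rfl | ⟨d, hvd, hdb⟩
    · exact Or.inr (Relation.ReflTransGen.head hvc hca)
    · have hcd := gstep_det hvc hvd
      subst hcd
      exact ih hdb

lemma conn_to_chains {G : TMGraph} {v w : G.V} (h : G.conn v w) :
    ∃ u, Relation.ReflTransGen (gstep G) v u ∧ Relation.ReflTransGen (gstep G) w u := by
  have h' : Relation.EqvGen G.adj v w := h
  induction h' with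
  | rel x y hxy =>
    obtain ⟨e, he⟩ := hxy
    rcases he with ⟨h1, h2⟩ | ⟨h1, h2⟩
    · exact ⟨y, Relation.ReflTransGen.single ⟨e, h1, h2⟩, Relation.ReflTransGen.refl⟩
    · exact ⟨x, Relation.ReflTransGen.refl, Relation.ReflTransGen.single ⟨e, h1, h2⟩⟩
  | refl x => exact ⟨x, Relation.ReflTransGen.refl, Relation.ReflTransGen.refl⟩
  | symm x y hxy ih => obtain ⟨u, h1, h2⟩ := ih hxy; exact ⟨u, h2, h1⟩
  | trans x y z hxy hyz ih1 ih2 =>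
    obtain ⟨u1, h1, h2⟩ := ih1 hxy
    obtain ⟨u2, h3, h4⟩ := ih2 hyz
    rcases rtg_total h2 h3 with h | h
    · exact ⟨u2, h1.trans h, h4⟩
    · exact ⟨u1, h1, h4.trans h⟩

lemma rtg_terminal {G : TMGraph} {s u : G.V} (hs : G.Terminal s)
    (h : Relation.ReflTransGen (gstep G) s u) : u = s := by
  rcases Relation.ReflTransGen.cases_head h with rfl | ⟨c, ⟨e, he, _⟩, _⟩
  · rfl
  · exact absurd he (hs e)

/-- In the underlying graph of a tangle machine, a process has at most one terminal
register. -/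
lemma terminal_unique {G : TMGraph} {s t : G.V} (hs : G.Terminal s) (ht : G.Terminal t)
    (h : G.conn s t) : s = t := by
  obtain ⟨u, h1, h2⟩ := conn_to_chains h
  exact (rtg_terminal hs h1).symm.trans (rtg_terminal ht h2)

open Classical in
/-- The (partial) successor of a register. -/
noncomputable def gnxt (G : TMGraph) (v : G.V) : Option G.V :=
  if h : ∃ e, G.src e = v then some (G.tgt h.choose) else none

lemma gnxt_some {G : TMGraph} {v w : G.V} (h : gnxt G v = some w) : gstep G v w := by
  unfold gnxt at h
  split at h
  · next hex => exact ⟨hex.choose, hex.choose_spec, Option.some.inj h⟩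
  · exact absurd h (by simp)

lemma gnxt_none {G : TMGraph} {v : G.V} (h : gnxt G v = none) : G.Terminal v := by
  intro e he
  unfold gnxt at h
  rw [dif_pos ⟨e, he⟩] at h
  exact Option.some_ne_none _ h

noncomputable def gseq (G : TMGraph) (v : G.V) : ℕ → Option G.V
  | 0 => some v
  | n + 1 => (gseq G v n).bind (gnxt G)

lemma gseq_conn {G : TMGraph} {v : G.V} : ∀ {n : ℕ} {w : G.V},
    gseq G v n = some w → G.conn v w := by
  intro n
  induction n with
  | zero =>
    intro w h
    have : v = w := Option.some.inj h
    subst this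
    exact Relation.EqvGen.refl v
  | succ n ih =>
    intro w h
    rw [gseq, Option.bind_eq_some_iff] at h
    obtain ⟨u, hu, hw⟩ := h
    obtain ⟨e, he1, he2⟩ := gnxt_some hw
    exact Relation.EqvGen.trans _ _ _ (ih hu) (Relation.EqvGen.rel _ _ ⟨e, Or.inl ⟨he1, he2⟩⟩)

lemma gseq_inj {G : TMGraph} {v : G.V} (hv : G.Initial v) :
    ∀ {m n : ℕ} {w : G.V}, gseq G v m = some w → gseq G v n = some w → m = n := by
  intro m
  induction m with
  | zero =>
    intro n w h1 h2
    cases n with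
    | zero => rfl
    | succ n =>
      have : v = w := Option.some.inj h1
      subst this
      rw [gseq, Option.bind_eq_some_iff] at h2
      obtain ⟨u, _, hw⟩ := h2
      obtain ⟨e, _, he2⟩ := gnxt_some hw
      exact absurd he2 (hv e)
  | succ m ih =>
    intro n w h1 h2
    cases n with
    | zero =>
      have : v = w := Option.some.inj h2
      subst this
      rw [gseq, Option.bind_eq_some_iff] at h1
      obtain ⟨u, _, hw⟩ := h1
      obtain ⟨e, _, he2⟩ := gnxt_some hw
      exact absurd he2 (hv e)
    | succ n =>
      rw [gseq, Option.bind_eq_some_iff] at h1 h2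
      obtain ⟨u1, hu1, hw1⟩ := h1
      obtain ⟨u2, hu2, hw2⟩ := h2
      have : u1 = u2 := gstep_codet (gnxt_some hw1) (gnxt_some hw2)
      subst this
      rw [ih hu1 hu2]

lemma gseq_none {G : TMGraph} {v : G.V} (hv : G.Initial v) : ∃ n, gseq G v n = none := by
  by_contra hcon
  push_neg at hcon
  have hsome : ∀ n, (gseq G v n).isSome := by
    intro n
    exact Option.ne_none_iff_isSome.mp (hcon n)
  set g : Fin (Fintype.card G.V + 1) → G.V := fun n => (gseq G v n.1).get (hsome n.1) with hg
  have hginj : Function.Injective g := by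
    intro i j hij
    have hi : gseq G v i.1 = some (g i) := by simp [hg]
    have hj : gseq G v j.1 = some (g j) := by simp [hg]
    rw [hij] at hi
    exact Fin.ext (gseq_inj hv hi hj)
  have := Fintype.card_le_of_injective g hginj
  simp at this

/-- Every open process has a terminal register. -/
lemma initial_exists_terminal {G : TMGraph} {v : G.V} (hv : G.Initial v) :
    ∃ t, G.Terminal t ∧ G.conn v t := by
  classical
  obtain ⟨n0, hn0⟩ := gseq_none hv
  have hex : ∃ n, gseq G v n = none := ⟨n0, hn0⟩
  set n := Nat.find hex with hn
  have hnone : gseq G v n = none := Nat.find_spec hex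
  have hnz : n ≠ 0 := by
    intro h
    rw [h] at hnone
    exact Option.some_ne_none v hnone
  obtain ⟨k, hk⟩ := Nat.exists_eq_succ_of_ne_zero hnz
  have hkn : gseq G v k ≠ none := Nat.find_min hex (by omega)
  obtain ⟨t, ht⟩ := Option.ne_none_iff_exists'.mp hkn
  have hnxt : gnxt G t = none := by
    have : gseq G v (k + 1) = none := by rw [← Nat.succ_eq_add_one, ← hk]; exact hnone
    rw [gseq, ht] at this
    exact this
  exact ⟨t, gnxt_none hnxt, gseq_conn ht⟩

end StableInvariantAux

section StableInvariantAux2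

variable {Q : Type} {R : RackStr Q}

/-- The identity rack automorphism. -/
def rackAutId (R : RackStr Q) : RackAut R := ⟨Equiv.refl Q, fun _ _ => rfl⟩

/-- The inverse of a rack automorphism. -/
def rackAutSymm (ψ : RackAut R) : RackAut R where
  toEquiv := ψ.toEquiv.symm
  map_act := by
    intro x y
    apply ψ.toEquiv.injective
    rw [Equiv.apply_symm_apply, ψ.map_act, Equiv.apply_symm_apply, Equiv.apply_symm_apply]

/-- Composition of rack automorphisms. -/
def rackAutComp (ψ₂ ψ₁ : RackAut R) : RackAut R where
  toEquiv := ψ₁.toEquiv.trans ψ₂.toEquiv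
  map_act := by
    intro x y
    simp only [Equiv.trans_apply, ψ₁.map_act, ψ₂.map_act]

lemma iso_adj {G H : TMGraph} (i : GraphIso G H) {v w : G.V} (h : G.adj v w) :
    H.adj (i.vEquiv v) (i.vEquiv w) := by
  obtain ⟨e, he⟩ := h
  refine ⟨i.eEquiv e, ?_⟩
  rcases he with ⟨h1, h2⟩ | ⟨h1, h2⟩
  · exact Or.inl ⟨by rw [i.src_map, h1], by rw [i.tgt_map, h2]⟩
  · exact Or.inr ⟨by rw [i.src_map, h1], by rw [i.tgt_map, h2]⟩

lemma iso_conn {G H : TMGraph} (i : GraphIso G H) {v w : G.V} (h : G.conn v w) :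
    H.conn (i.vEquiv v) (i.vEquiv w) := by
  have h' : Relation.EqvGen G.adj v w := h
  induction h' with
  | rel x y hxy => exact Relation.EqvGen.rel _ _ (iso_adj i hxy)
  | refl x => exact Relation.EqvGen.refl _
  | symm x y hxy ih => exact Relation.EqvGen.symm _ _ (ih hxy)
  | trans x y z hxy hyz ih1 ih2 => exact Relation.EqvGen.trans _ _ _ (ih1 hxy) (ih2 hyz)

lemma iso_initial {G H : TMGraph} (i : GraphIso G H) {v : G.V} (h : G.Initial v) :
    H.Initial (i.vEquiv v) := by
  intro e' he'
  have ht := i.tgt_map (i.eEquiv.symm e')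
  rw [Equiv.apply_symm_apply] at ht
  rw [ht] at he'
  exact h _ (i.vEquiv.injective he')

lemma iso_initial_rev {G H : TMGraph} (i : GraphIso G H) {v : G.V}
    (h : H.Initial (i.vEquiv v)) : G.Initial v := by
  intro e he
  exact h (i.eEquiv e) (by rw [i.tgt_map, he])

lemma iso_terminal {G H : TMGraph} (i : GraphIso G H) {v : G.V} (h : G.Terminal v) :
    H.Terminal (i.vEquiv v) := by
  intro e' he'
  have ht := i.src_map (i.eEquiv.symm e')
  rw [Equiv.apply_symm_apply] at ht
  rw [ht] at he'
  exact h _ (i.vEquiv.injective he')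

lemma contract_conn {G : TMGraph} {e0 : G.E} {hne : G.src e0 ≠ G.tgt e0}
    {a b : (G.contract e0 hne).V} (h : (G.contract e0 hne).conn a b) : G.conn a.1 b.1 := by
  have h' : Relation.EqvGen (G.contract e0 hne).adj a b := h
  induction h' with
  | rel x y hxy =>
    obtain ⟨e, he⟩ := hxy
    have hadj : ∀ p q : (G.contract e0 hne).V,
        (G.contract e0 hne).src e = p → (G.contract e0 hne).tgt e = q → G.conn p.1 q.1 := by
      intro p q hp hq
      have hq' : q.1 = G.tgt e.1 := by rw [← hq]; rfl
      by_cases hc : G.src e.1 = G.tgt e0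
      · have hp' : p.1 = G.src e0 := by
          rw [← hp]
          show ((if h : G.src e.1 = G.tgt e0 then (⟨G.src e0, hne⟩ : {v : G.V // v ≠ G.tgt e0})
            else ⟨G.src e.1, h⟩)).1 = _
          rw [dif_pos hc]
        have c1 : G.conn (G.src e0) (G.src e.1) := by
          rw [hc]
          exact Relation.EqvGen.rel _ _ ⟨e0, Or.inl ⟨rfl, rfl⟩⟩
        have c2 : G.conn (G.src e.1) (G.tgt e.1) :=
          Relation.EqvGen.rel _ _ ⟨e.1, Or.inl ⟨rfl, rfl⟩⟩
        rw [hp', hq']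
        exact Relation.EqvGen.trans _ _ _ c1 c2
      · have hp' : p.1 = G.src e.1 := by
          rw [← hp]
          show ((if h : G.src e.1 = G.tgt e0 then (⟨G.src e0, hne⟩ : {v : G.V // v ≠ G.tgt e0})
            else ⟨G.src e.1, h⟩)).1 = _
          rw [dif_neg hc]
        rw [hp', hq']
        exact Relation.EqvGen.rel _ _ ⟨e.1, Or.inl ⟨rfl, rfl⟩⟩
    rcases he with ⟨h1, h2⟩ | ⟨h1, h2⟩
    · exact hadj _ _ h1 h2
    · exact Relation.EqvGen.symm _ _ (hadj _ _ h1 h2)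
  | refl x => exact Relation.EqvGen.refl _
  | symm x y hxy ih => exact Relation.EqvGen.symm _ _ (ih hxy)
  | trans x y z hxy hyz ih1 ih2 => exact Relation.EqvGen.trans _ _ _ (ih1 hxy) (ih2 hyz)

/-- The key invariant carried through the induction on stable equivalence. -/
def GoodInv (M M' : BMachine Q R) : Prop :=
  ∃ β : {v : M.G.V // M.G.Initial v} ≃ {v : M'.G.V // M'.G.Initial v},
    ∀ r : {v : M.G.V // M.G.Initial v}, ∃ ψ : RackAut R,
      M'.m.ρ (β r).1 = ψ.toEquiv (M.m.ρ r.1) ∧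
      ∀ (s : M.G.V) (s' : M'.G.V), M.G.Terminal s → M.G.conn r.1 s →
        M'.G.Terminal s' → M'.G.conn (β r).1 s' →
        M'.m.ρ s' = ψ.toEquiv (M.m.ρ s)

lemma goodInv_refl (M : BMachine Q R) : GoodInv M M := by
  refine ⟨Equiv.refl _, fun r => ⟨rackAutId R, rfl, ?_⟩⟩
  intro s s' hs hc hs' hc'
  have hc'' : M.G.conn r.1 s' := hc'
  have : s' = s :=
    terminal_unique hs' hs (Relation.EqvGen.trans _ _ _ (Relation.EqvGen.symm _ _ hc'') hc)
  rw [this]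
  rfl

lemma goodInv_symm {M M' : BMachine Q R} (h : GoodInv M M') : GoodInv M' M := by
  obtain ⟨β, hβ⟩ := h
  refine ⟨β.symm, fun r' => ?_⟩
  obtain ⟨ψ, h1, h2⟩ := hβ (β.symm r')
  have heq : β (β.symm r') = r' := β.apply_symm_apply r'
  refine ⟨rackAutSymm ψ, ?_, ?_⟩
  · rw [heq] at h1
    rw [h1]
    exact (ψ.toEquiv.symm_apply_apply _).symm
  · intro s s' hs hc hs' hc'
    have h3 := h2 s' s hs' hc' hs (by rw [heq]; exact hc)
    rw [h3]
    exact (ψ.toEquiv.symm_apply_apply _).symm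

lemma goodInv_trans {M M' M'' : BMachine Q R} (h1 : GoodInv M M') (h2 : GoodInv M' M'') :
    GoodInv M M'' := by
  obtain ⟨β1, hβ1⟩ := h1
  obtain ⟨β2, hβ2⟩ := h2
  refine ⟨β1.trans β2, fun r => ?_⟩
  obtain ⟨ψ1, ha1, hb1⟩ := hβ1 r
  obtain ⟨ψ2, ha2, hb2⟩ := hβ2 (β1 r)
  refine ⟨rackAutComp ψ2 ψ1, ?_, ?_⟩
  · show M''.m.ρ (β2 (β1 r)).1 = ψ2.toEquiv (ψ1.toEquiv (M.m.ρ r.1))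
    rw [ha2, ha1]
  · intro s s'' hs hc hs'' hc''
    obtain ⟨t, ht, hct⟩ := initial_exists_terminal (β1 r).2
    have e1 := hb1 s t hs hc ht hct
    have e2 := hb2 t s'' ht hct hs'' hc''
    show M''.m.ρ s'' = ψ2.toEquiv (ψ1.toEquiv (M.m.ρ s))
    rw [e2, e1]

end StableInvariantAux2

section StableInvariantAux3

variable {Q : Type} {R : RackStr Q}

lemma goodInv_move {G : TMGraph} {M M' : Machine Q R G} (h : Move true M M') :
    GoodInv (⟨G, M⟩ : BMachine Q R) ⟨G, M'⟩ := by
  refine ⟨Equiv.refl _, fun r => ?_⟩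
  rcases h with hrec | hr2 | hr3 | hr1
  · -- Recolour move
    obtain ⟨hφ, ψc, hρ⟩ := hrec
    refine ⟨ψc (G.compOf r.1), hρ r.1, ?_⟩
    intro s s' hs hc hs' hc'
    have hc'' : G.conn r.1 s' := hc'
    have hss : s' = s :=
      terminal_unique hs' hs (Relation.EqvGen.trans _ _ _ (Relation.EqvGen.symm _ _ hc'') hc)
    subst hss
    have hcomp : G.compOf r.1 = G.compOf s' := Quotient.sound hc
    rw [hρ s', ← hcomp]
  · -- R2 move
    obtain ⟨e1, e2, h12, _, _, hρ⟩ := hr2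
    refine ⟨rackAutId R, ?_, ?_⟩
    · exact hρ r.1 (Ne.symm (r.2 e1))
    · intro s s' hs hc hs' hc'
      have hc'' : G.conn r.1 s' := hc'
      have hss : s' = s :=
        terminal_unique hs' hs (Relation.EqvGen.trans _ _ _ (Relation.EqvGen.symm _ _ hc'') hc)
      subst hss
      refine hρ s' ?_
      intro hcon
      exact hs' e2 (h12.symm.trans hcon.symm)
  · -- R3 move
    obtain ⟨f, rz, strands, _, _, hstr, _, hρ⟩ := hr3
    refine ⟨rackAutId R, ?_, ?_⟩
    · exact hρ r.1 (fun p _ => Ne.symm (r.2 p.1))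
    · intro s s' hs hc hs' hc'
      have hc'' : G.conn r.1 s' := hc'
      have hss : s' = s :=
        terminal_unique hs' hs (Relation.EqvGen.trans _ _ _ (Relation.EqvGen.symm _ _ hc'') hc)
      subst hss
      refine hρ s' ?_
      intro p hp hcon
      exact hs' p.2 (((hstr p hp).1).symm.trans hcon.symm)
  · -- R1 move
    obtain ⟨_, _, _, _, hρ⟩ := hr1
    refine ⟨rackAutId R, by rw [hρ.2]; rfl, ?_⟩
    intro s s' hs hc hs' hc'
    have hc'' : G.conn r.1 s' := hc'
    have hss : s' = s :=
      terminal_unique hs' hs (Relation.EqvGen.trans _ _ _ (Relation.EqvGen.symm _ _ hc'') hc)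
    subst hss
    rw [hρ.2]
    rfl

lemma goodInv_iso {M M' : BMachine Q R} (h : MachineIso M M') : GoodInv M M' := by
  obtain ⟨i, hρ, hφ⟩ := h
  refine ⟨Equiv.subtypeEquiv i.vEquiv (fun v => ⟨fun hv => iso_initial i hv,
    fun hv => iso_initial_rev i hv⟩), fun r => ⟨rackAutId R, ?_, ?_⟩⟩
  · exact hρ r.1
  · intro s s' hs hc hs' hc'
    have hterm : M'.G.Terminal (i.vEquiv s) := iso_terminal i hs
    have hconn : M'.G.conn (i.vEquiv r.1) (i.vEquiv s) := iso_conn i hc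
    have hc'' : M'.G.conn (i.vEquiv r.1) s' := hc'
    have hss : s' = i.vEquiv s :=
      terminal_unique hs' hterm
        (Relation.EqvGen.trans _ _ _ (Relation.EqvGen.symm _ _ hc'') hconn)
    subst hss
    exact hρ s

lemma goodInv_destab {G : TMGraph} (M : Machine Q R G) (e0 : G.E) (h0 : M.φ e0 = none)
    (hne : G.src e0 ≠ G.tgt e0) :
    GoodInv (⟨G, M⟩ : BMachine Q R) ⟨G.contract e0 hne, M.destab e0 h0 hne⟩ := by
  have hρ0 : M.ρ (G.tgt e0) = M.ρ (G.src e0) := by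
    have hcp := M.compat e0
    rw [h0] at hcp
    exact hcp
  refine ⟨{
    toFun := fun r => ⟨⟨r.1, fun hh => r.2 e0 hh.symm⟩, ?_⟩
    invFun := fun r => ⟨r.1.1, ?_⟩
    left_inv := fun r => rfl
    right_inv := fun r => Subtype.ext (Subtype.ext rfl) }, fun r => ⟨rackAutId R, rfl, ?_⟩⟩
  · -- image is initial in the contracted graph
    intro e' he'
    have : G.tgt e'.1 = r.1 := congrArg Subtype.val he'
    exact r.2 e'.1 this
  · -- preimage is initial in G
    intro e he
    by_cases heq : e = e0
    · exact r.1.2 (heq ▸ he).symm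
    · exact r.2 ⟨e, heq⟩ (Subtype.ext he)
  · -- terminal colours
    intro s s' hs hc hs' hc'
    have hcs' : G.conn r.1 s'.1 := contract_conn hc'
    show M.ρ s'.1 = M.ρ s
    by_cases hw : s'.1 = G.src e0
    · have hterm : G.Terminal (G.tgt e0) := by
        intro e he
        by_cases heq : e = e0
        · exact hne (heq ▸ he)
        · refine hs' ⟨e, heq⟩ ?_
          apply Subtype.ext
          show ((if h : G.src e = G.tgt e0 then (⟨G.src e0, hne⟩ : {v : G.V // v ≠ G.tgt e0})
            else ⟨G.src e, h⟩)).1 = s'.1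
          rw [dif_pos he, hw]
      have hconn : G.conn r.1 (G.tgt e0) := by
        refine Relation.EqvGen.trans _ _ _ hcs' ?_
        rw [hw]
        exact Relation.EqvGen.rel _ _ ⟨e0, Or.inl ⟨rfl, rfl⟩⟩
      have hse : s = G.tgt e0 :=
        terminal_unique hs hterm
          (Relation.EqvGen.trans _ _ _ (Relation.EqvGen.symm _ _ hc) hconn)
      rw [hw, hse, hρ0]
    · have hterm : G.Terminal s'.1 := by
        intro e he
        by_cases heq : e = e0
        · exact hw ((heq ▸ he).symm)
        · refine hs' ⟨e, heq⟩ ?_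
          apply Subtype.ext
          show ((if h : G.src e = G.tgt e0 then (⟨G.src e0, hne⟩ : {v : G.V // v ≠ G.tgt e0})
            else ⟨G.src e, h⟩)).1 = s'.1
          have hnz : G.src e ≠ G.tgt e0 := by rw [he]; exact s'.2
          rw [dif_neg hnz]
          exact he
      have hss : s'.1 = s :=
        terminal_unique hterm hs
          (Relation.EqvGen.trans _ _ _ (Relation.EqvGen.symm _ _ hcs') hc)
      rw [hss]

end StableInvariantAux3

/-- The initial and terminal colour sets of a tangle machine, indexed so that
for each `i` the register `sᵢ` is the terminal register of the open process whose initial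
register is `rᵢ`, are stable machine invariants: if two machines are stably equivalent,
then there is a bijection between their open processes (equivalently, their initial
registers) and rack automorphisms on connected components carrying the indexed initial and
terminal colours of one machine to those of the other. -/
theorem initial_terminal_colour_sets_stable_invariant (Q : Type) (R : RackStr Q)
    (M M' : BMachine Q R) (h : StabEquivB true M M') :
    ∃ β : {v : M.G.V // M.G.Initial v} ≃ {v : M'.G.V // M'.G.Initial v},
      ∀ (r : {v : M.G.V // M.G.Initial v}) (s : M.G.V),
        M.G.Terminal s → M.G.conn r.1 s →
        ∀ s' : M'.G.V, M'.G.Terminal s' → M'.G.conn (β r).1 s' →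
          ∃ ψ : RackAut R, M'.m.ρ (β r).1 = ψ.toEquiv (M.m.ρ r.1) ∧
            M'.m.ρ s' = ψ.toEquiv (M.m.ρ s) := by
  have hg : GoodInv M M' := by
    have h' : Relation.EqvGen (SStep true) M M' := h
    induction h' with
    | rel a b hab =>
      cases hab with
      | move hm => exact goodInv_move hm
      | iso hi => exact goodInv_iso hi
      | destab N e0 h0 hne hout => exact goodInv_destab N e0 h0 hne
    | refl a => exact goodInv_refl a
    | symm a b hab ih => exact goodInv_symm (ih hab)
    | trans a b c hab hbc ih1 ih2 => exact goodInv_trans (ih1 hab) (ih2 hbc)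
  obtain ⟨β, hβ⟩ := hg
  refine ⟨β, fun r s hs hc s' hs' hc' => ?_⟩
  obtain ⟨ψ, h1, h2⟩ := hβ r
  exact ⟨ψ, h1, h2 s s' hs hc hs' hc'⟩
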